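/- Let n and k be integers with 1 ≤ k ≤ n/2 and let G be a connected simple graph on n vertices with minimum degree at least k. If R'(G) = n/2 − (1/2)·(1/k − 1/(n−1))·k·(n−k), then G is isomorphic to the complete split graph K*_{k,n−k}. -/

import Mathlib

open scoped Classical

/-- The variation of the Randić index: `R'(G) = ∑_{uv ∈ E(G)} 1 / max(d(u), d(v))`. -/
noncomputable def Rvar {V : Type*} [Fintype V] (G : SimpleGraph V) : ℝ :=
  ∑ e ∈ G.edgeFinset,
    Sym2.lift ⟨fun u v => (1 : ℝ) / (max (G.degree u) (G.degree v) : ℕ),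
      fun u v => by dsimp only; rw [max_comm]⟩ e

/-- The complete split graph `K*_{k,n-k}` on `n` vertices: the first `k` vertices form a
clique and are adjacent to all other vertices; the remaining `n - k` vertices form an
independent set. -/
def completeSplitGraph (n k : ℕ) : SimpleGraph (Fin n) where
  Adj u v := u ≠ v ∧ ((u : ℕ) < k ∨ (v : ℕ) < k)
  symm := ⟨fun _ _ h => ⟨h.1.symm, h.2.symm⟩⟩
  loopless := ⟨fun _ h => h.1 rfl⟩

section RvAux

variable {V : Type*} [Fintype V] (G : SimpleGraph V)

private lemma rv_sum_dart_eq_pairs (p : V → V → ℝ) :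
    ∑ d : G.Dart, p d.fst d.snd = ∑ v, ∑ w ∈ G.neighborFinset v, p v w := by
  classical
  have h1 : ∑ d : G.Dart, p d.fst d.snd
      = ∑ z ∈ Finset.univ.filter (fun z : V × V => G.Adj z.1 z.2), p z.1 z.2 := by
    refine Finset.sum_bij' (fun d _ => d.toProd) (fun z h => ⟨z, (Finset.mem_filter.1 h).2⟩)
      ?_ ?_ ?_ ?_ ?_ <;> simp
  rw [h1, Finset.sum_filter, Fintype.sum_prod_type]
  refine Finset.sum_congr rfl fun v _ => ?_
  rw [SimpleGraph.neighborFinset_eq_filter, Finset.sum_filter]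

private lemma rv_two_mul_sum_edge (f : V → V → ℝ) (hf : ∀ u v, f u v = f v u) :
    2 * ∑ e ∈ G.edgeFinset, Sym2.lift ⟨f, hf⟩ e = ∑ v, ∑ w ∈ G.neighborFinset v, f v w := by
  rw [← rv_sum_dart_eq_pairs]
  have h2 : ∀ d : G.Dart, f d.fst d.snd = Sym2.lift ⟨f, hf⟩ d.edge := fun d => by
    rw [SimpleGraph.Dart.edge]; rfl
  have h3 : ∑ d : G.Dart, Sym2.lift ⟨f, hf⟩ d.edge
      = ∑ e ∈ G.edgeFinset, 2 * Sym2.lift ⟨f, hf⟩ e := by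
    rw [← Finset.sum_fiberwise_of_maps_to
      (fun (d : G.Dart) (_ : d ∈ Finset.univ) => SimpleGraph.mem_edgeFinset.2 d.edge_mem)
      (fun d => Sym2.lift ⟨f, hf⟩ d.edge)]
    refine Finset.sum_congr rfl fun e he => ?_
    have hcongr : ∀ d ∈ Finset.univ.filter (fun d : G.Dart => d.edge = e),
        Sym2.lift ⟨f, hf⟩ d.edge = Sym2.lift ⟨f, hf⟩ e := fun d hd => by
      rw [(Finset.mem_filter.1 hd).2]
    rw [Finset.sum_congr rfl hcongr, Finset.sum_const,
      G.dart_edge_fiber_card e (SimpleGraph.mem_edgeFinset.1 he)]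
    rw [two_smul]; ring
  rw [Finset.mul_sum, ← h3]
  exact Finset.sum_congr rfl fun d _ => (h2 d).symm

private lemma rv_tele (a b : ℕ) (ha : 1 ≤ a) (hab : a ≤ b) :
    ∑ j ∈ Finset.Ico a b, (1:ℝ)/((j:ℝ)*((j:ℝ)+1)) = 1/(a:ℝ) - 1/(b:ℝ) := by
  induction b, hab using Nat.le_induction with
  | base => simp
  | succ b hab ih =>
    rw [Finset.sum_Ico_succ_top hab, ih]
    have hb : (1:ℝ) ≤ (b:ℝ) := by exact_mod_cast le_trans ha hab
    have h1 : (b:ℝ) ≠ 0 := by linarith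
    have h2 : (b:ℝ) + 1 ≠ 0 := by linarith
    push_cast
    field_simp
    ring

private lemma rv_pair_decomp {k n : ℕ} (du dv : ℕ) (hk : 1 ≤ k) (hdu : k ≤ du)
    (hdv : dv ≤ n - 1) :
    (1:ℝ)/(du:ℝ) - 1/((max du dv : ℕ):ℝ)
      = ∑ j ∈ Finset.Ico k (n-1), (if du ≤ j ∧ j < dv then (1:ℝ)/((j:ℝ)*((j:ℝ)+1)) else 0) := by
  have hfil : Finset.Ico du dv = (Finset.Ico k (n-1)).filter (fun j => du ≤ j ∧ j < dv) := by
    ext j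
    simp only [Finset.mem_Ico, Finset.mem_filter]
    omega
  rw [← Finset.sum_filter, ← hfil]
  rcases le_or_gt dv du with h | h
  · rw [Finset.Ico_eq_empty (by omega), max_eq_left h]
    simp
  · rw [max_eq_right h.le, rv_tele du dv (le_trans hk hdu) h.le]

private lemma rv_key {n k : ℕ} (hk : 1 ≤ k)
    (hcard : Fintype.card V = n) (hmin : ∀ v, k ≤ G.degree v) :
    (n:ℝ) - 2 * Rvar G = ∑ j ∈ Finset.Ico k (n-1), (1:ℝ)/((j:ℝ)*((j:ℝ)+1)) *
      (∑ v, ∑ w ∈ G.neighborFinset v,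
        (if G.degree v ≤ j ∧ j < G.degree w then (1:ℝ) else 0)) := by
  have hdeg : ∀ v, G.degree v ≤ n - 1 := fun v => by
    have h := G.degree_lt_card_verts v
    omega
  have hdeg0 : ∀ v, (G.degree v : ℝ) ≠ 0 := fun v => by
    have := le_trans hk (hmin v)
    positivity
  have h2R : 2 * Rvar G = ∑ v, ∑ w ∈ G.neighborFinset v,
      (1:ℝ) / ((max (G.degree v) (G.degree w) : ℕ):ℝ) := by
    exact rv_two_mul_sum_edge G _ _
  have hn : (n:ℝ) = ∑ v : V, ∑ w ∈ G.neighborFinset v, (1:ℝ)/(G.degree v : ℝ) := by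
    have h1 : ∀ v : V, ∑ w ∈ G.neighborFinset v, (1:ℝ)/(G.degree v : ℝ) = 1 := fun v => by
      rw [Finset.sum_const, SimpleGraph.card_neighborFinset_eq_degree, nsmul_eq_mul,
        mul_one_div, div_self (hdeg0 v)]
    rw [Finset.sum_congr rfl (fun v _ => h1 v), Finset.sum_const, Finset.card_univ, hcard,
      nsmul_eq_mul, mul_one]
  rw [h2R, hn, ← Finset.sum_sub_distrib]
  have hsw : ∀ v, (∑ w ∈ G.neighborFinset v, (1:ℝ)/(G.degree v : ℝ))
        - ∑ w ∈ G.neighborFinset v, (1:ℝ) / ((max (G.degree v) (G.degree w) : ℕ):ℝ)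
      = ∑ w ∈ G.neighborFinset v, ∑ j ∈ Finset.Ico k (n-1),
          (if G.degree v ≤ j ∧ j < G.degree w then (1:ℝ)/((j:ℝ)*((j:ℝ)+1)) else 0) := by
    intro v
    rw [← Finset.sum_sub_distrib]
    exact Finset.sum_congr rfl fun w _ =>
      rv_pair_decomp (G.degree v) (G.degree w) hk (hmin v) (hdeg w)
  rw [Finset.sum_congr rfl (fun v _ => hsw v)]
  calc ∑ v : V, ∑ w ∈ G.neighborFinset v, ∑ j ∈ Finset.Ico k (n-1),
        (if G.degree v ≤ j ∧ j < G.degree w then (1:ℝ)/((j:ℝ)*((j:ℝ)+1)) else 0)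
      = ∑ v : V, ∑ j ∈ Finset.Ico k (n-1), ∑ w ∈ G.neighborFinset v,
        (if G.degree v ≤ j ∧ j < G.degree w then (1:ℝ)/((j:ℝ)*((j:ℝ)+1)) else 0) :=
        Finset.sum_congr rfl fun v _ => Finset.sum_comm
    _ = ∑ j ∈ Finset.Ico k (n-1), ∑ v : V, ∑ w ∈ G.neighborFinset v,
        (if G.degree v ≤ j ∧ j < G.degree w then (1:ℝ)/((j:ℝ)*((j:ℝ)+1)) else 0) :=
        Finset.sum_comm
    _ = _ := by
        refine Finset.sum_congr rfl fun j _ => ?_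
        rw [Finset.mul_sum]
        refine Finset.sum_congr rfl fun v _ => ?_
        rw [Finset.mul_sum]
        refine Finset.sum_congr rfl fun w _ => ?_
        rw [mul_ite, mul_one, mul_zero]

private lemma rv_B1 {k a : ℕ} (hk : 1 ≤ k) (hmin : ∀ v, k ≤ G.degree v) :
    ∑ j ∈ Finset.Ico k a, (1:ℝ)/((j:ℝ)*((j:ℝ)+1)) *
      (∑ v, ∑ w ∈ G.neighborFinset v, (if G.degree v ≤ j ∧ j < G.degree w then (1:ℝ) else 0))
    ≤ ∑ v ∈ Finset.univ.filter (fun v => G.degree v < a), (1 - (G.degree v : ℝ)/(a : ℝ)) := by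
  have hstep1 : ∀ j, (∑ v, ∑ w ∈ G.neighborFinset v,
      (if G.degree v ≤ j ∧ j < G.degree w then (1:ℝ) else 0))
      ≤ ∑ v, (if G.degree v ≤ j then (G.degree v : ℝ) else 0) := by
    intro j
    refine Finset.sum_le_sum fun v _ => ?_
    by_cases h : G.degree v ≤ j
    · rw [if_pos h]
      calc ∑ w ∈ G.neighborFinset v, (if G.degree v ≤ j ∧ j < G.degree w then (1:ℝ) else 0)
          ≤ ∑ w ∈ G.neighborFinset v, (1:ℝ) := by
            refine Finset.sum_le_sum fun w _ => ?_
            split <;> norm_num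
        _ = (G.degree v : ℝ) := by
            rw [Finset.sum_const, SimpleGraph.card_neighborFinset_eq_degree, nsmul_eq_mul, mul_one]
    · rw [if_neg h]
      have hz : ∀ w ∈ G.neighborFinset v,
          (if G.degree v ≤ j ∧ j < G.degree w then (1:ℝ) else 0) = 0 := fun w _ => by
        simp only [ite_eq_right_iff]; intro hc; exact absurd hc.1 h
      rw [Finset.sum_eq_zero hz]
  have hmono : ∑ j ∈ Finset.Ico k a, (1:ℝ)/((j:ℝ)*((j:ℝ)+1)) *
      (∑ v, ∑ w ∈ G.neighborFinset v, (if G.degree v ≤ j ∧ j < G.degree w then (1:ℝ) else 0))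
      ≤ ∑ j ∈ Finset.Ico k a, (1:ℝ)/((j:ℝ)*((j:ℝ)+1)) *
      (∑ v, (if G.degree v ≤ j then (G.degree v : ℝ) else 0)) := by
    refine Finset.sum_le_sum fun j hj => ?_
    have hw : (0:ℝ) ≤ 1/((j:ℝ)*((j:ℝ)+1)) := by positivity
    exact mul_le_mul_of_nonneg_left (hstep1 j) hw
  refine le_trans hmono (le_of_eq ?_)
  calc ∑ j ∈ Finset.Ico k a, (1:ℝ)/((j:ℝ)*((j:ℝ)+1)) *
        (∑ v, (if G.degree v ≤ j then (G.degree v : ℝ) else 0))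
      = ∑ j ∈ Finset.Ico k a, ∑ v,
        (if G.degree v ≤ j then (1:ℝ)/((j:ℝ)*((j:ℝ)+1)) * (G.degree v : ℝ) else 0) := by
        refine Finset.sum_congr rfl fun j _ => ?_
        rw [Finset.mul_sum]
        exact Finset.sum_congr rfl fun v _ => by rw [mul_ite, mul_zero]
    _ = ∑ v, ∑ j ∈ Finset.Ico k a,
        (if G.degree v ≤ j then (1:ℝ)/((j:ℝ)*((j:ℝ)+1)) * (G.degree v : ℝ) else 0) :=
        Finset.sum_comm
    _ = ∑ v, (if G.degree v < a then (1 - (G.degree v:ℝ)/(a:ℝ)) else 0) := by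
        refine Finset.sum_congr rfl fun v _ => ?_
        have hfil : (Finset.Ico k a).filter (fun j => G.degree v ≤ j)
            = Finset.Ico (G.degree v) a := by
          ext j
          simp only [Finset.mem_Ico, Finset.mem_filter]
          have := hmin v
          omega
        rw [← Finset.sum_filter, hfil]
        by_cases h : G.degree v < a
        · rw [if_pos h]
          have hd1 : 1 ≤ G.degree v := le_trans hk (hmin v)
          have htel := rv_tele (G.degree v) a hd1 h.le
          calc ∑ j ∈ Finset.Ico (G.degree v) a, (1:ℝ)/((j:ℝ)*((j:ℝ)+1)) * (G.degree v : ℝ)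
              = (∑ j ∈ Finset.Ico (G.degree v) a, (1:ℝ)/((j:ℝ)*((j:ℝ)+1))) * (G.degree v : ℝ) := by
                rw [Finset.sum_mul]
            _ = (1/(G.degree v:ℝ) - 1/(a:ℝ)) * (G.degree v : ℝ) := by rw [htel]
            _ = 1 - (G.degree v:ℝ)/(a:ℝ) := by
                have h0 : (G.degree v : ℝ) ≠ 0 := by
                  have : (1:ℝ) ≤ (G.degree v : ℝ) := by exact_mod_cast hd1
                  linarith
                field_simp
        · rw [if_neg h, Finset.Ico_eq_empty (by omega), Finset.sum_empty]
    _ = ∑ v ∈ Finset.univ.filter (fun v => G.degree v < a), (1 - (G.degree v : ℝ)/(a : ℝ)) := by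
        rw [Finset.sum_filter]

private lemma rv_B3 {k n p j : ℕ} (hcard : Fintype.card V = n) (hkn : 2*k ≤ n)
    (hpj : p ≤ j)
    (hp4 : (Finset.univ.filter (fun v => p+1 ≤ G.degree v)).card + 1 ≤ k) :
    (∑ v, ∑ w ∈ G.neighborFinset v, (if G.degree v ≤ j ∧ j < G.degree w then (1:ℝ) else 0))
    ≤ ((k:ℝ) - 1) * ((n:ℝ) - (k:ℝ) + 1) := by
  set m := (Finset.univ.filter (fun v : V => j < G.degree v)).card with hm_def
  set l := (Finset.univ.filter (fun v : V => G.degree v ≤ j)).card with hl_def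
  have hsub : (Finset.univ.filter (fun v : V => j < G.degree v))
      ⊆ (Finset.univ.filter (fun v : V => p+1 ≤ G.degree v)) := by
    intro v hv
    simp only [Finset.mem_filter] at hv ⊢
    exact ⟨hv.1, by omega⟩
  have hmk : m + 1 ≤ k :=
    le_trans (Nat.add_le_add_right (Finset.card_le_card hsub) 1) hp4
  have hlm : l + m = n := by
    rw [hl_def, hm_def, ← hcard]
    have h1 : (Finset.univ.filter (fun v : V => j < G.degree v))
        = (Finset.univ.filter (fun v : V => ¬ G.degree v ≤ j)) := by
      refine Finset.filter_congr fun v _ => ?_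
      simp [not_le]
    rw [h1, Finset.card_filter_add_card_filter_not, Finset.card_univ]
  have hinner : ∀ v : V, (∑ w ∈ G.neighborFinset v,
      (if G.degree v ≤ j ∧ j < G.degree w then (1:ℝ) else 0))
      ≤ (if G.degree v ≤ j then (m:ℝ) else 0) := by
    intro v
    by_cases h : G.degree v ≤ j
    · rw [if_pos h]
      calc ∑ w ∈ G.neighborFinset v, (if G.degree v ≤ j ∧ j < G.degree w then (1:ℝ) else 0)
          ≤ ∑ w ∈ G.neighborFinset v, (if j < G.degree w then (1:ℝ) else 0) := by
            refine Finset.sum_le_sum fun w _ => ?_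
            by_cases hc : G.degree v ≤ j ∧ j < G.degree w
            · rw [if_pos hc, if_pos hc.2]
            · rw [if_neg hc]; split <;> norm_num
        _ = (((G.neighborFinset v).filter (fun w => j < G.degree w)).card : ℝ) := by
            rw [Finset.sum_boole]
        _ ≤ (m:ℝ) := by
            rw [hm_def]
            exact_mod_cast Finset.card_le_card
              (Finset.filter_subset_filter _ (Finset.subset_univ _))
    · rw [if_neg h]
      have hz : ∀ w ∈ G.neighborFinset v,
          (if G.degree v ≤ j ∧ j < G.degree w then (1:ℝ) else 0) = 0 := fun w _ => by
        simp only [ite_eq_right_iff]; intro hc; exact absurd hc.1 h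
      rw [Finset.sum_eq_zero hz]
  have htot : (∑ v, ∑ w ∈ G.neighborFinset v,
      (if G.degree v ≤ j ∧ j < G.degree w then (1:ℝ) else 0)) ≤ (l:ℝ) * (m:ℝ) := by
    calc (∑ v, ∑ w ∈ G.neighborFinset v,
        (if G.degree v ≤ j ∧ j < G.degree w then (1:ℝ) else 0))
        ≤ ∑ v, (if G.degree v ≤ j then (m:ℝ) else 0) := Finset.sum_le_sum fun v _ => hinner v
      _ = (l:ℝ) * (m:ℝ) := by
          rw [← Finset.sum_filter, Finset.sum_const, hl_def, nsmul_eq_mul]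
  refine le_trans htot ?_
  have hm' : (m:ℝ) ≤ (k:ℝ) - 1 := by
    have : (m:ℝ) + 1 ≤ (k:ℝ) := by exact_mod_cast hmk
    linarith
  have hl' : (l:ℝ) = (n:ℝ) - (m:ℝ) := by
    have : (l:ℝ) + (m:ℝ) = (n:ℝ) := by exact_mod_cast hlm
    linarith
  have hkn' : 2*(k:ℝ) ≤ (n:ℝ) := by exact_mod_cast hkn
  have hm0 : (0:ℝ) ≤ (m:ℝ) := Nat.cast_nonneg m
  nlinarith [mul_nonneg (by linarith : (0:ℝ) ≤ (k:ℝ) - 1 - m)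
    (by linarith : (0:ℝ) ≤ (n:ℝ) - k + 1 - m)]

private lemma rv_build_iso {n k : ℕ} (hk : 1 ≤ k) (hkn : 2*k ≤ n) (hn3 : 3 ≤ n)
    (hcard : Fintype.card V = n) (A : Finset V) (hAcard : A.card = k)
    (hAdeg : ∀ v ∈ A, G.degree v = n-1) (hBdeg : ∀ v, v ∉ A → G.degree v = k) :
    Nonempty (G ≃g completeSplitGraph n k) := by
  have huniv : ∀ a ∈ A, ∀ w, w ≠ a → G.Adj a w := by
    intro a ha w hw
    have hNsub : G.neighborFinset a ⊆ Finset.univ.erase a := by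
      intro x hx
      exact Finset.mem_erase.2 ⟨(G.ne_of_adj ((SimpleGraph.mem_neighborFinset _ _ _).1 hx)).symm,
        Finset.mem_univ x⟩
    have hNeq : G.neighborFinset a = Finset.univ.erase a := by
      refine Finset.eq_of_subset_of_card_le hNsub (le_of_eq ?_)
      rw [Finset.card_erase_of_mem (Finset.mem_univ a), Finset.card_univ, hcard,
        SimpleGraph.card_neighborFinset_eq_degree, hAdeg a ha]
    have hmem : w ∈ G.neighborFinset a := by
      rw [hNeq]
      exact Finset.mem_erase.2 ⟨hw, Finset.mem_univ w⟩
    exact (SimpleGraph.mem_neighborFinset _ _ _).1 hmem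
  have hNB : ∀ u, u ∉ A → G.neighborFinset u = A := by
    intro u hu
    have hsub : A ⊆ G.neighborFinset u := by
      intro a ha
      have hne : u ≠ a := by
        intro h
        exact hu (h ▸ ha)
      exact (SimpleGraph.mem_neighborFinset _ _ _).2 (huniv a ha u hne).symm
    refine (Finset.eq_of_subset_of_card_le hsub (le_of_eq ?_)).symm
    rw [SimpleGraph.card_neighborFinset_eq_degree, hBdeg u hu, hAcard]
  have hadj : ∀ u v, G.Adj u v ↔ (u ≠ v ∧ (u ∈ A ∨ v ∈ A)) := by
    intro u v
    constructor
    · intro h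
      refine ⟨G.ne_of_adj h, ?_⟩
      by_contra hc
      push_neg at hc
      have hmem : v ∈ G.neighborFinset u := (SimpleGraph.mem_neighborFinset _ _ _).2 h
      rw [hNB u hc.1] at hmem
      exact hc.2 hmem
    · rintro ⟨hne, hA | hA⟩
      · exact huniv u hA v (Ne.symm hne)
      · exact (huniv v hA u hne).symm
  have hAc : Aᶜ.card = n - k := by
    rw [Finset.card_compl, hAcard, hcard]
  have hnk : k + (n - k) = n := by omega
  let e1 : {x // x ∈ A} ≃ Fin k := A.equivFinOfCardEq hAcard
  let e2 : {x // ¬ x ∈ A} ≃ Fin (n - k) :=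
    (Equiv.subtypeEquivRight (fun x => (Finset.mem_compl (s := A)).symm)).trans
      (Aᶜ.equivFinOfCardEq hAc)
  let φ : V ≃ Fin n :=
    ((Equiv.sumCompl (fun v => v ∈ A)).symm.trans
      ((Equiv.sumCongr e1 e2).trans (finSumFinEquiv.trans (finCongr hnk))))
  have hφlt : ∀ v : V, ((φ v : ℕ) < k ↔ v ∈ A) := by
    intro v
    by_cases hv : v ∈ A
    · simp only [φ, Equiv.trans_apply, Equiv.sumCompl_symm_apply_of_pos hv,
        Equiv.sumCongr_apply, Sum.map_inl, finSumFinEquiv_apply_left, finCongr_apply,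
        Fin.coe_cast, Fin.coe_castAdd]
      exact ⟨fun _ => hv, fun _ => (e1 ⟨v, hv⟩).isLt⟩
    · simp only [φ, Equiv.trans_apply, Equiv.sumCompl_symm_apply_of_neg hv,
        Equiv.sumCongr_apply, Sum.map_inr, finSumFinEquiv_apply_right, finCongr_apply,
        Fin.coe_cast, Fin.coe_natAdd]
      constructor
      · intro h; omega
      · intro h; exact absurd h hv
  refine ⟨⟨φ, ?_⟩⟩
  intro u v
  show ((φ u ≠ φ v) ∧ ((φ u : ℕ) < k ∨ (φ v : ℕ) < k)) ↔ G.Adj u v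
  rw [hadj u v, hφlt u, hφlt v]
  have hne : φ u ≠ φ v ↔ u ≠ v := not_congr ⟨fun h => φ.injective h, fun h => h ▸ rfl⟩
  rw [hne]

private lemma rv_arith (a b K N : ℝ) (h1 : 0 < (a - b) * (N + 1 - 2*K))
    (h2 : (N - K) * (1 - K*b) ≤ (N - K) * (1 - K*a) + ((K-1)*(N-K+1))*(a-b)) : False := by
  nlinarith [h1, h2]

end RvAux

theorem stmt_2 {n k : ℕ} (hk : 1 ≤ k) (hkn : 2 * k ≤ n)
    {V : Type*} [Fintype V] (G : SimpleGraph V)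
    (hcard : Fintype.card V = n) (hconn : G.Connected)
    (hmin : ∀ v : V, k ≤ G.degree v)
    (heq : Rvar G = (n : ℝ) / 2 - (1 / 2) * (1 / k - 1 / ((n : ℝ) - 1)) * k * (n - k)) :
    Nonempty (G ≃g completeSplitGraph n k) := by
  classical
  have hn2 : 2 ≤ n := by omega
  -- degenerate case n = 2
  by_cases hn2' : n = 2
  · have hk1 : k = 1 := by omega
    have hadj : ∀ u v : V, G.Adj u v ↔ u ≠ v := by
      intro u v
      constructor
      · exact fun h => G.ne_of_adj h
      · intro huv
        have hd : 1 ≤ G.degree u := hk1 ▸ hmin u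
        have hne : (G.neighborFinset u).Nonempty := by
          rw [← Finset.card_pos, SimpleGraph.card_neighborFinset_eq_degree]
          omega
        obtain ⟨w, hw⟩ := hne
        have hadjw : G.Adj u w := (SimpleGraph.mem_neighborFinset _ _ _).1 hw
        have hwu : w ≠ u := (G.ne_of_adj hadjw).symm
        have huniv2 : ({u, v} : Finset V) = Finset.univ := by
          refine Finset.eq_univ_of_card _ ?_
          rw [Finset.card_insert_of_notMem (fun h => huv (Finset.mem_singleton.1 h)),
            Finset.card_singleton, hcard, hn2']
        have hwmem : w ∈ ({u, v} : Finset V) := huniv2 ▸ Finset.mem_univ w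
        rcases Finset.mem_insert.1 hwmem with h | h
        · exact absurd h hwu
        · rw [Finset.mem_singleton] at h
          exact h ▸ hadjw
    let φ : V ≃ Fin n := Fintype.equivFinOfCardEq hcard
    refine ⟨⟨φ, ?_⟩⟩
    intro u v
    show ((φ u ≠ φ v) ∧ ((φ u : ℕ) < k ∨ (φ v : ℕ) < k)) ↔ G.Adj u v
    rw [hadj u v]
    constructor
    · rintro ⟨h, _⟩
      exact fun he => h (he ▸ rfl)
    · intro h
      have hne : φ u ≠ φ v := fun hc => h (φ.injective hc)
      refine ⟨hne, ?_⟩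
      have h1 := (φ u).isLt
      have h2 := (φ v).isLt
      have h3 : (φ u : ℕ) ≠ (φ v : ℕ) := fun hc => hne (Fin.ext hc)
      omega
  have hn3 : 3 ≤ n := by omega
  have hkn1 : k < n - 1 := by omega
  have hdeg_le : ∀ v, G.degree v ≤ n - 1 := fun v => by
    have h := G.degree_lt_card_verts v
    omega
  have hcastn1 : ((n-1:ℕ):ℝ) = (n:ℝ) - 1 := by
    rw [Nat.cast_sub (by omega : 1 ≤ n)]
    norm_num
  have hk0 : (k:ℝ) ≠ 0 := by positivity
  have hn1pos : (0:ℝ) < (n:ℝ) - 1 := by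
    have : (3:ℝ) ≤ (n:ℝ) := by exact_mod_cast hn3
    linarith
  -- the main identity and hypothesis
  have hkey := rv_key G hk hcard hmin
  have hQ : ∑ j ∈ Finset.Ico k (n-1), (1:ℝ)/((j:ℝ)*((j:ℝ)+1)) *
      (∑ v, ∑ w ∈ G.neighborFinset v,
        (if G.degree v ≤ j ∧ j < G.degree w then (1:ℝ) else 0))
      = ((n:ℝ) - k) * (1 - (k:ℝ)/((n:ℝ)-1)) := by
    rw [← hkey, heq]
    field_simp
    ring
  -- definition of p, the k-th largest degree
  set S : Finset ℕ := (Finset.Icc k (n-1)).filter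
    (fun j => k ≤ (Finset.univ.filter (fun v : V => j ≤ G.degree v)).card) with hS_def
  have hkS : k ∈ S := by
    rw [hS_def, Finset.mem_filter, Finset.mem_Icc]
    refine ⟨⟨le_refl k, by omega⟩, ?_⟩
    have hall : Finset.univ.filter (fun v : V => k ≤ G.degree v) = Finset.univ :=
      Finset.filter_true_of_mem (fun v _ => hmin v)
    rw [hall, Finset.card_univ, hcard]
    omega
  have hSne : S.Nonempty := ⟨k, hkS⟩
  set p := S.max' hSne with hp_def
  have hpS : p ∈ S := S.max'_mem hSne
  have hp1 : k ≤ p := S.le_max' k hkS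
  have hp2 : p ≤ n - 1 := (Finset.mem_Icc.1 (Finset.mem_filter.1 hpS).1).2
  have hp3 : k ≤ (Finset.univ.filter (fun v : V => p ≤ G.degree v)).card :=
    (Finset.mem_filter.1 hpS).2
  have hppos : (0:ℝ) < (p:ℝ) := by
    have : 1 ≤ p := le_trans hk hp1
    exact_mod_cast this
  by_cases hpn : p = n - 1
  · -- Case 1: equality case, extract the structure
    have hb1 := rv_B1 G (a := n-1) hk hmin
    rw [hcastn1] at hb1
    set Low := Finset.univ.filter (fun v : V => G.degree v < n-1) with hLow_def
    set x : ℝ := 1 - (k:ℝ)/((n:ℝ)-1) with hx_def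
    have hxpos : 0 < x := by
      rw [hx_def]
      have hc : (k:ℝ) < (n:ℝ) - 1 := by
        have : ((k:ℕ):ℝ) < ((n-1:ℕ):ℝ) := by exact_mod_cast hkn1
        rwa [hcastn1] at this
      have : (k:ℝ)/((n:ℝ)-1) < 1 := by
        rw [div_lt_one hn1pos]
        exact hc
      linarith
    have hterm : ∀ v ∈ Low, 1 - (G.degree v : ℝ)/((n:ℝ)-1) ≤ x := by
      intro v _
      rw [hx_def]
      have h1 : (k:ℝ) ≤ (G.degree v : ℝ) := by exact_mod_cast hmin v
      have h2 : (k:ℝ)/((n:ℝ)-1) ≤ (G.degree v : ℝ)/((n:ℝ)-1) := by gcongr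
      linarith
    have hcardLow : Low.card + k ≤ n := by
      have hsplit2 : Low.card + (Finset.univ.filter (fun v : V => ¬ G.degree v < n-1)).card
          = n := by
        rw [hLow_def, Finset.card_filter_add_card_filter_not, Finset.card_univ, hcard]
      have hcompl : (Finset.univ.filter (fun v : V => ¬ G.degree v < n-1))
          = (Finset.univ.filter (fun v : V => p ≤ G.degree v)) := by
        refine Finset.filter_congr fun v _ => ?_
        have := hdeg_le v
        constructor
        · intro h; omega
        · intro h; omega
      rw [hcompl] at hsplit2
      omega
    have hcardLowR : (Low.card : ℝ) ≤ (n:ℝ) - k := by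
      have : ((Low.card : ℕ) : ℝ) + (k:ℝ) ≤ (n:ℝ) := by exact_mod_cast hcardLow
      linarith
    have hsum2 : ∑ v ∈ Low, (1 - (G.degree v : ℝ)/((n:ℝ)-1)) ≤ (Low.card:ℝ) * x := by
      calc ∑ v ∈ Low, (1 - (G.degree v : ℝ)/((n:ℝ)-1)) ≤ ∑ _v ∈ Low, x :=
            Finset.sum_le_sum hterm
        _ = (Low.card:ℝ) * x := by rw [Finset.sum_const, nsmul_eq_mul]
    have hchain1 : ((n:ℝ) - k) * x ≤ ∑ v ∈ Low, (1 - (G.degree v : ℝ)/((n:ℝ)-1)) := by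
      rw [← hQ]
      exact hb1
    have hchain2 : (Low.card:ℝ) * x ≤ ((n:ℝ) - k) * x :=
      mul_le_mul_of_nonneg_right hcardLowR hxpos.le
    have hs1 : ∑ v ∈ Low, (1 - (G.degree v : ℝ)/((n:ℝ)-1)) = ((n:ℝ) - k) * x :=
      le_antisymm (hsum2.trans hchain2) hchain1
    have hs2 : (Low.card:ℝ) * x = ((n:ℝ) - k) * x :=
      le_antisymm hchain2 (hs1 ▸ hsum2)
    have hcardLow_eq : Low.card = n - k := by
      have hr : (Low.card:ℝ) = (n:ℝ) - k := mul_right_cancel₀ hxpos.ne' hs2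
      have hr2 : (Low.card:ℝ) = ((n - k:ℕ):ℝ) := by
        rw [hr, Nat.cast_sub (by omega : k ≤ n)]
      exact_mod_cast hr2
    have hs3 : ∑ v ∈ Low, (1 - (G.degree v : ℝ)/((n:ℝ)-1)) = ∑ _v ∈ Low, x := by
      rw [hs1, Finset.sum_const, nsmul_eq_mul, hcardLow_eq, Nat.cast_sub (by omega : k ≤ n)]
    have hptw : ∀ v ∈ Low, 1 - (G.degree v : ℝ)/((n:ℝ)-1) = x :=
      (Finset.sum_eq_sum_iff_of_le hterm).1 hs3
    have hLowdeg : ∀ v ∈ Low, G.degree v = k := by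
      intro v hv
      have h1 := hptw v hv
      rw [hx_def] at h1
      have h2 : (G.degree v : ℝ)/((n:ℝ)-1) = (k:ℝ)/((n:ℝ)-1) := by linarith
      have h3 : G.degree v = k := by
        field_simp at h2
        exact_mod_cast h2
      exact h3
    -- build the iso
    set A : Finset V := Finset.univ.filter (fun v : V => ¬ G.degree v < n-1) with hA_def
    have hAcard : A.card = k := by
      have hsplit2 : Low.card + A.card = n := by
        rw [hLow_def, hA_def, Finset.card_filter_add_card_filter_not,
          Finset.card_univ, hcard]
      omega
    have hAdeg : ∀ v ∈ A, G.degree v = n-1 := by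
      intro v hv
      rw [hA_def, Finset.mem_filter] at hv
      have := hdeg_le v
      omega
    have hBdeg : ∀ v, v ∉ A → G.degree v = k := by
      intro v hv
      rw [hA_def, Finset.mem_filter] at hv
      push_neg at hv
      have hvLow : v ∈ Low := by
        rw [hLow_def, Finset.mem_filter]
        exact ⟨Finset.mem_univ v, hv (Finset.mem_univ v)⟩
      exact hLowdeg v hvLow
    exact rv_build_iso G hk hkn hn3 hcard A hAcard hAdeg hBdeg
  · -- Case 2: strict inequality, contradiction
    exfalso
    have hplt : p + 1 ≤ n - 1 := by omega
    have hp4 : (Finset.univ.filter (fun v : V => p+1 ≤ G.degree v)).card + 1 ≤ k := by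
      by_contra hcon
      push_neg at hcon
      have hmem : p + 1 ∈ S := by
        rw [hS_def, Finset.mem_filter, Finset.mem_Icc]
        exact ⟨⟨by omega, hplt⟩, by omega⟩
      have := S.le_max' _ hmem
      omega
    have hsplit : ∑ j ∈ Finset.Ico k (n-1), (1:ℝ)/((j:ℝ)*((j:ℝ)+1)) *
        (∑ v, ∑ w ∈ G.neighborFinset v,
          (if G.degree v ≤ j ∧ j < G.degree w then (1:ℝ) else 0))
        = (∑ j ∈ Finset.Ico k p, (1:ℝ)/((j:ℝ)*((j:ℝ)+1)) *
        (∑ v, ∑ w ∈ G.neighborFinset v,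
          (if G.degree v ≤ j ∧ j < G.degree w then (1:ℝ) else 0)))
        + ∑ j ∈ Finset.Ico p (n-1), (1:ℝ)/((j:ℝ)*((j:ℝ)+1)) *
        (∑ v, ∑ w ∈ G.neighborFinset v,
          (if G.degree v ≤ j ∧ j < G.degree w then (1:ℝ) else 0)) :=
      (Finset.sum_Ico_consecutive _ hp1 hp2).symm
    -- first chunk
    have hb1 := rv_B1 G (a := p) hk hmin
    have hcardlowp : ((Finset.univ.filter (fun v : V => G.degree v < p)).card : ℝ)
        ≤ (n:ℝ) - k := by
      have hsplit2 : (Finset.univ.filter (fun v : V => G.degree v < p)).card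
          + (Finset.univ.filter (fun v : V => ¬ G.degree v < p)).card = n := by
        rw [Finset.card_filter_add_card_filter_not, Finset.card_univ, hcard]
      have hcompl : (Finset.univ.filter (fun v : V => ¬ G.degree v < p))
          = (Finset.univ.filter (fun v : V => p ≤ G.degree v)) := by
        refine Finset.filter_congr fun v _ => ?_
        simp [not_lt]
      rw [hcompl] at hsplit2
      have : (Finset.univ.filter (fun v : V => G.degree v < p)).card + k ≤ n := by omega
      have hc : (((Finset.univ.filter (fun v : V => G.degree v < p)).card : ℕ):ℝ) + (k:ℝ)
          ≤ (n:ℝ) := by exact_mod_cast this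
      linarith
    have hxp : (0:ℝ) ≤ 1 - (k:ℝ)/(p:ℝ) := by
      have h1 : (k:ℝ) ≤ (p:ℝ) := by exact_mod_cast hp1
      have : (k:ℝ)/(p:ℝ) ≤ 1 := by
        rw [div_le_one hppos]
        exact h1
      linarith
    have hb1' : ∑ v ∈ Finset.univ.filter (fun v : V => G.degree v < p),
        (1 - (G.degree v : ℝ)/(p : ℝ)) ≤ ((n:ℝ) - k) * (1 - (k:ℝ)/(p:ℝ)) := by
      calc ∑ v ∈ Finset.univ.filter (fun v : V => G.degree v < p),
          (1 - (G.degree v : ℝ)/(p : ℝ))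
          ≤ ∑ _v ∈ Finset.univ.filter (fun v : V => G.degree v < p), (1 - (k:ℝ)/(p:ℝ)) := by
            refine Finset.sum_le_sum fun v _ => ?_
            have h1 : (k:ℝ) ≤ (G.degree v : ℝ) := by exact_mod_cast hmin v
            have h2 : (k:ℝ)/(p:ℝ) ≤ (G.degree v : ℝ)/(p:ℝ) := by gcongr
            linarith
        _ = ((Finset.univ.filter (fun v : V => G.degree v < p)).card : ℝ)
            * (1 - (k:ℝ)/(p:ℝ)) := by rw [Finset.sum_const, nsmul_eq_mul]
        _ ≤ ((n:ℝ) - k) * (1 - (k:ℝ)/(p:ℝ)) := mul_le_mul_of_nonneg_right hcardlowp hxp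
    -- second chunk
    have hb2 : ∑ j ∈ Finset.Ico p (n-1), (1:ℝ)/((j:ℝ)*((j:ℝ)+1)) *
        (∑ v, ∑ w ∈ G.neighborFinset v,
          (if G.degree v ≤ j ∧ j < G.degree w then (1:ℝ) else 0))
        ≤ (((k:ℝ)-1) * ((n:ℝ)-(k:ℝ)+1)) * (1/(p:ℝ) - 1/((n:ℝ)-1)) := by
      calc ∑ j ∈ Finset.Ico p (n-1), (1:ℝ)/((j:ℝ)*((j:ℝ)+1)) *
          (∑ v, ∑ w ∈ G.neighborFinset v,
            (if G.degree v ≤ j ∧ j < G.degree w then (1:ℝ) else 0))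
          ≤ ∑ j ∈ Finset.Ico p (n-1), (1:ℝ)/((j:ℝ)*((j:ℝ)+1)) *
            (((k:ℝ)-1) * ((n:ℝ)-(k:ℝ)+1)) := by
            refine Finset.sum_le_sum fun j hj => ?_
            have hw : (0:ℝ) ≤ 1/((j:ℝ)*((j:ℝ)+1)) := by positivity
            exact mul_le_mul_of_nonneg_left
              (rv_B3 G hcard hkn (Finset.mem_Ico.1 hj).1 hp4) hw
        _ = (((k:ℝ)-1) * ((n:ℝ)-(k:ℝ)+1)) * (1/(p:ℝ) - 1/((n:ℝ)-1)) := by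
            rw [← Finset.sum_mul, mul_comm, rv_tele p (n-1) (le_trans hk hp1) hp2, hcastn1]
    -- combine and contradict
    have hfinal : ((n:ℝ) - k) * (1 - (k:ℝ)/((n:ℝ)-1))
        ≤ ((n:ℝ) - k) * (1 - (k:ℝ)/(p:ℝ))
          + (((k:ℝ)-1) * ((n:ℝ)-(k:ℝ)+1)) * (1/(p:ℝ) - 1/((n:ℝ)-1)) := by
      rw [← hQ, hsplit]
      exact add_le_add (le_trans hb1 hb1') hb2
    have hpltn : (p:ℝ) < (n:ℝ) - 1 := by
      have h1 : ((p+1:ℕ):ℝ) ≤ ((n-1:ℕ):ℝ) := by exact_mod_cast hplt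
      rw [hcastn1] at h1
      push_cast at h1
      linarith
    have hdivlt : 1/((n:ℝ)-1) < 1/(p:ℝ) := one_div_lt_one_div_of_lt hppos hpltn
    have hcoef : (0:ℝ) < (n:ℝ) + 1 - 2*(k:ℝ) := by
      have : 2*(k:ℝ) ≤ (n:ℝ) := by exact_mod_cast hkn
      linarith
    have hker : (0:ℝ) < (1/(p:ℝ) - 1/((n:ℝ)-1)) * ((n:ℝ) + 1 - 2*(k:ℝ)) :=
      mul_pos (by linarith) hcoef
    have hkP : (k:ℝ)/(p:ℝ) = (k:ℝ) * (1/(p:ℝ)) := by ring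
    have hkN : (k:ℝ)/((n:ℝ)-1) = (k:ℝ) * (1/((n:ℝ)-1)) := by ring
    rw [hkP, hkN] at hfinal
    exact rv_arith (1/(p:ℝ)) (1/((n:ℝ)-1)) (k:ℝ) (n:ℝ) hker hfinal
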